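/- Let F be a finite field, G a finite abelian group, and u, v ∈ FG with FG·u = Ann(v) and FG·v = Ann(u). If u = a·u^{(-1)} for some unit a ∈ FG, then there exists a unit b ∈ FG with v = b·v^{(-1)}. -/

import Mathlib

/-- The annihilator of a single element of the group algebra. -/
def ann {F G : Type*} [Field F] [CommGroup G] (v : MonoidAlgebra F G) :
    Ideal (MonoidAlgebra F G) where
  carrier := {x | x * v = 0}
  add_mem' := by
    intro a b ha hb
    simp only [Set.mem_setOf_eq, add_mul] at *
    rw [ha, hb, add_zero]
  zero_mem' := by simp
  smul_mem' := by
    intro c x hx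
    simp only [Set.mem_setOf_eq, smul_eq_mul] at *
    rw [mul_assoc, hx, mul_zero]

/-- `w^{(-1)} = Σ_g w_{g⁻¹} g`. -/
def inv' {F G : Type*} [Field F] [CommGroup G] (v : MonoidAlgebra F G) :
    MonoidAlgebra F G :=
  MonoidAlgebra.ofCoeff (Finsupp.equivMapDomain (Equiv.inv G) v.coeff)

/-- In a finite monoid, some positive power of every element is idempotent. -/
lemma pow_idem_aux {R : Type*} [Monoid R] [Finite R] (z : R) :
    ∃ m : ℕ, 0 < m ∧ z ^ m * z ^ m = z ^ m := by
  obtain ⟨i, j, hne, hij⟩ := Finite.exists_ne_map_eq_of_infinite (fun n : ℕ => z ^ n)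
  wlog hlt : i < j generalizing i j
  · exact this j i hne.symm hij.symm (by omega)
  set t := j - i with ht
  have ht1 : 0 < t := by omega
  have key : ∀ s k, i ≤ k → z ^ (k + s * t) = z ^ k := by
    intro s
    induction s with
    | zero => simp
    | succ n ih =>
      intro k hk
      have h1 : z ^ (k + t) = z ^ k := by
        have hkt : k + t = (k - i) + j := by omega
        have hki : k = (k - i) + i := by omega
        rw [hkt, pow_add, ← hij, ← pow_add, ← hki]
      calc z ^ (k + (n + 1) * t) = z ^ (k + t + n * t) := by ring_nf
        _ = z ^ (k + t) := ih (k + t) (by omega)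
        _ = z ^ k := h1
  refine ⟨(i + 1) * t, by positivity, ?_⟩
  rw [← pow_add]
  exact key (i + 1) ((i + 1) * t) (by nlinarith)

/-- In a finite commutative ring, mutually dividing elements are associated. -/
lemma assoc_of_finite {R : Type*} [CommRing R] [Finite R] {x y c d : R}
    (h1 : x = c * y) (h2 : y = d * x) : ∃ b : Rˣ, x = (b : R) * y := by
  obtain ⟨m, hm, hidem⟩ := pow_idem_aux (c * d)
  set h := (c * d) ^ m with hh
  set p := (c * d) ^ (m - 1) with hp
  have e2 : c * d * p = h := by
    rw [hp, hh, ← pow_succ']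
    congr 1
    omega
  have hcdx : c * d * x = x := by rw [mul_assoc, ← h2, ← h1]
  have hx : ∀ k, (c * d) ^ k * x = x := by
    intro k
    induction k with
    | zero => simp
    | succ n ih => rw [pow_succ, mul_comm ((c*d)^n) (c*d), mul_assoc, ih, hcdx]
  have hhy : h * y = y := by
    rw [h2, ← mul_assoc, mul_comm h d, mul_assoc, hh, hx m]
  have hval : (c * h + (1 - h)) * (d * p * h + (1 - h)) = 1 := by
    linear_combination (2 - c - d * p + c * d * p) * hidem + h * e2
  refine ⟨⟨c * h + (1 - h), d * p * h + (1 - h), hval, by rw [mul_comm]; exact hval⟩, ?_⟩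
  show x = (c * h + (1 - h)) * y
  linear_combination (1 - c) * hhy + h1

section MA

variable {F G : Type*} [Field F] [CommGroup G]

lemma inv'_eq (x : MonoidAlgebra F G) :
    inv' x = MonoidAlgebra.domCongr F F (MulEquiv.inv G) x := by
  ext g
  simp [inv', Finsupp.equivMapDomain_apply, MonoidAlgebra.domCongr_apply, MonoidAlgebra.coeff_ofCoeff]

lemma inv'_mul (x y : MonoidAlgebra F G) : inv' (x * y) = inv' x * inv' y := by
  simp only [inv'_eq, map_mul]

lemma inv'_inv' (x : MonoidAlgebra F G) : inv' (inv' x) = x := by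
  ext g
  simp [inv', Finsupp.equivMapDomain_apply, MonoidAlgebra.coeff_ofCoeff]

lemma inv'_zero : inv' (0 : MonoidAlgebra F G) = 0 := by
  simp only [inv'_eq, map_zero]

end MA

theorem stmt_17 (F G : Type*) [Field F] [Fintype F] [CommGroup G] [Fintype G]
    (u v : MonoidAlgebra F G)
    (hu : (Ideal.span {u} : Ideal (MonoidAlgebra F G)) = ann v)
    (hv : (Ideal.span {v} : Ideal (MonoidAlgebra F G)) = ann u)
    (a : (MonoidAlgebra F G)ˣ) (ha : u = (a : MonoidAlgebra F G) * inv' u) :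
    ∃ b : (MonoidAlgebra F G)ˣ, v = (b : MonoidAlgebra F G) * inv' v := by
  have hfin : Finite (MonoidAlgebra F G) :=
    Finite.of_injective (fun (f : MonoidAlgebra F G) (g : G) => f.coeff g)
      (fun f g h => MonoidAlgebra.ext (Finsupp.ext (fun x => congrFun h x)))
  have huv : u * v = 0 := by
    have h := Ideal.mem_span_singleton_self u
    rw [hu] at h
    exact h
  have h2 : inv' u * inv' v = 0 := by
    rw [← inv'_mul, huv, inv'_zero]
  have h3 : u * inv' v = 0 := by
    rw [ha, mul_assoc, h2, mul_zero]
  have h4 : inv' v ∈ ann u := by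
    show inv' v * u = 0
    rw [mul_comm]
    exact h3
  rw [← hv] at h4
  obtain ⟨r, hr⟩ := Ideal.mem_span_singleton'.mp h4
  have h5 : v = inv' r * inv' v := by
    have := congrArg inv' hr
    rw [inv'_mul, inv'_inv'] at this
    exact this.symm
  exact assoc_of_finite h5 hr.symm
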